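/- Let φ : Y → X be a continuous map between Hausdorff topological spaces and let Z = Y ∪̇_φ X. If X and Y are first countable, X is compact, Y is locally compact, and the preimage φ⁻¹(x) of every point x ∈ X is compact, then Z is first countable. -/

import Mathlib

open Set TopologicalSpace Filter Topology

def dotCup {X Y : Type*} [TopologicalSpace X] [TopologicalSpace Y] (φ : Y → X) :
    TopologicalSpace (X ⊕ Y) :=
  TopologicalSpace.generateFrom
    ({s | ∃ V : Set Y, IsOpen V ∧ s = Sum.inr '' V} ∪
     {s | ∃ (U : Set X) (K : Set Y), IsOpen U ∧ IsCompact K ∧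
        s = Sum.inl '' U ∪ Sum.inr '' (φ ⁻¹' U \ K)})

section aux
variable {X Y : Type*} [TopologicalSpace X] [TopologicalSpace Y] (φ : Y → X)

def dcB : Set (Set (X ⊕ Y)) :=
  ({s | ∃ V : Set Y, IsOpen V ∧ s = Sum.inr '' V} ∪
   {s | ∃ (U : Set X) (K : Set Y), IsOpen U ∧ IsCompact K ∧
      s = Sum.inl '' U ∪ Sum.inr '' (φ ⁻¹' U \ K)})

lemma dcB_inter2 (V : Set Y) (U : Set X) (A : Set Y) :
    (Sum.inr '' V : Set (X ⊕ Y)) ∩ (Sum.inl '' U ∪ Sum.inr '' A) = Sum.inr '' (V ∩ A) := by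
  ext z; cases z <;> simp <;> tauto

lemma dcB_inter3 (U U' : Set X) (A A' : Set Y) :
    ((Sum.inl '' U ∪ Sum.inr '' A) : Set (X ⊕ Y)) ∩ (Sum.inl '' U' ∪ Sum.inr '' A') =
      Sum.inl '' (U ∩ U') ∪ Sum.inr '' (A ∩ A') := by
  ext z; cases z <;> simp <;> tauto

lemma dcB_diff (U U' : Set X) (K K' : Set Y) :
    (φ ⁻¹' U \ K) ∩ (φ ⁻¹' U' \ K') = φ ⁻¹' (U ∩ U') \ (K ∪ K') := by
  ext y; simp; tauto

variable [T2Space Y]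

lemma dcB_basis (hφ : Continuous φ) :
    @IsTopologicalBasis (X ⊕ Y) (dotCup φ) (dcB φ) := by
  letI : TopologicalSpace (X ⊕ Y) := dotCup φ
  refine ⟨?_, ?_, rfl⟩
  · rintro t₁ h₁ t₂ h₂ z hz
    refine ⟨t₁ ∩ t₂, ?_, hz, subset_rfl⟩
    rcases h₁ with ⟨V, hV, rfl⟩ | ⟨U, K, hU, hK, rfl⟩ <;>
      rcases h₂ with ⟨V', hV', rfl⟩ | ⟨U', K', hU', hK', rfl⟩
    · exact Or.inl ⟨V ∩ V', hV.inter hV', (Set.image_inter Sum.inr_injective).symm⟩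
    · refine Or.inl ⟨V ∩ (φ ⁻¹' U' \ K'), hV.inter ((hU'.preimage hφ).sdiff hK'.isClosed), ?_⟩
      exact dcB_inter2 V U' _
    · refine Or.inl ⟨V' ∩ (φ ⁻¹' U \ K), hV'.inter ((hU.preimage hφ).sdiff hK.isClosed), ?_⟩
      rw [Set.inter_comm]
      exact dcB_inter2 V' U _
    · refine Or.inr ⟨U ∩ U', K ∪ K', hU.inter hU', hK.union hK', ?_⟩
      rw [dcB_inter3, dcB_diff]
  · apply Set.eq_univ_of_univ_subset
    intro z _
    refine Set.mem_sUnion.2 ⟨Sum.inl '' (univ : Set X) ∪ Sum.inr '' (φ ⁻¹' univ \ ∅),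
      Or.inr ⟨univ, ∅, isOpen_univ, isCompact_empty, rfl⟩, ?_⟩
    cases z <;> simp

end aux

theorem dotCup_firstCountable {X Y : Type*} [TopologicalSpace X] [TopologicalSpace Y]
    [T2Space X] [T2Space Y]
    [FirstCountableTopology X] [FirstCountableTopology Y]
    [CompactSpace X] [LocallyCompactSpace Y]
    (φ : Y → X) (hφ : Continuous φ) (hfib : ∀ x : X, IsCompact (φ ⁻¹' {x})) :
    @FirstCountableTopology (X ⊕ Y) (dotCup φ) := by
  letI : TopologicalSpace (X ⊕ Y) := dotCup φ
  have hB := dcB_basis φ hφ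
  refine ⟨fun z => ?_⟩
  cases z with
  | inr y =>
    obtain ⟨b, hb⟩ := (𝓝 y).exists_antitone_basis
    set S : ℕ → Set (X ⊕ Y) := fun n => Sum.inr '' interior (b n) with hSdef
    have hS : ∀ n, S n ∈ 𝓝 (Sum.inr y : X ⊕ Y) := by
      intro n
      refine (hB.isOpen (Or.inl ⟨_, isOpen_interior, rfl⟩)).mem_nhds ?_
      exact ⟨y, mem_interior_iff_mem_nhds.2 (hb.toHasBasis.mem_of_mem trivial), rfl⟩
    have hbas : (𝓝 (Sum.inr y : X ⊕ Y)).HasBasis (fun _ : ℕ => True) S := by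
      refine Filter.hasBasis_iff.2 fun t => ⟨fun ht => ?_, fun ⟨n, _, hn⟩ =>
        Filter.mem_of_superset (hS n) hn⟩
      obtain ⟨u, hu, hzu, hut⟩ := hB.mem_nhds_iff.1 ht
      rcases hu with ⟨V, hV, rfl⟩ | ⟨U, K, hU, hK, rfl⟩
      · obtain ⟨y', hy', hy'e⟩ := hzu
        obtain rfl : y' = y := Sum.inr_injective hy'e
        obtain ⟨n, -, hn⟩ := hb.toHasBasis.mem_iff.1 (hV.mem_nhds hy')
        exact ⟨n, trivial, (Set.image_mono (interior_subset.trans hn)).trans hut⟩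
      · have hy : y ∈ φ ⁻¹' U \ K := by
          rcases hzu with ⟨x', _, h⟩ | ⟨y', hy', h⟩
          · exact absurd h (by simp)
          · obtain rfl : y' = y := Sum.inr_injective h
            exact hy'
        obtain ⟨n, -, hn⟩ := hb.toHasBasis.mem_iff.1
          (((hU.preimage hφ).sdiff hK.isClosed).mem_nhds hy)
        refine ⟨n, trivial, ?_⟩
        refine (Set.image_mono (interior_subset.trans hn)).trans ?_
        exact (Set.subset_union_right).trans hut
    exact hbas.isCountablyGenerated
  | inl x =>
    obtain ⟨C, hC, hfC⟩ := exists_compact_superset (hfib x)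
    obtain ⟨b, hb⟩ := (𝓝 x).exists_antitone_basis
    set S : ℕ → Set (X ⊕ Y) := fun n =>
      Sum.inl '' interior (b n) ∪ Sum.inr '' (φ ⁻¹' interior (b n) \ C) with hSdef
    have hxb : ∀ n, x ∈ interior (b n) := fun n =>
      mem_interior_iff_mem_nhds.2 (hb.toHasBasis.mem_of_mem trivial)
    have hS : ∀ n, S n ∈ 𝓝 (Sum.inl x : X ⊕ Y) := by
      intro n
      refine (hB.isOpen (Or.inr ⟨interior (b n), C, isOpen_interior, hC, rfl⟩)).mem_nhds ?_
      exact Or.inl ⟨x, hxb n, rfl⟩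
    have hbas : (𝓝 (Sum.inl x : X ⊕ Y)).HasBasis (fun _ : ℕ => True) S := by
      refine Filter.hasBasis_iff.2 fun t => ⟨fun ht => ?_, fun ⟨n, _, hn⟩ =>
        Filter.mem_of_superset (hS n) hn⟩
      obtain ⟨u, hu, hzu, hut⟩ := hB.mem_nhds_iff.1 ht
      rcases hu with ⟨V, hV, rfl⟩ | ⟨U, K, hU, hK, rfl⟩
      · obtain ⟨y', _, h⟩ := hzu
        exact absurd h (by simp)
      · have hxU : x ∈ U := by
          rcases hzu with ⟨x', hx', h⟩ | ⟨y', _, h⟩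
          · obtain rfl : x' = x := Sum.inl_injective h
            exact hx'
          · exact absurd h (by simp)
        have hD : IsCompact (K \ interior C) := hK.diff isOpen_interior
        have hxW : x ∈ (φ '' (K \ interior C))ᶜ := by
          rintro ⟨y', ⟨hyK, hyC⟩, hyx⟩
          exact hyC (hfC (by simp [hyx]))
        have hW : IsOpen ((φ '' (K \ interior C))ᶜ) := (hD.image hφ).isClosed.isOpen_compl
        obtain ⟨n, -, hn⟩ := hb.toHasBasis.mem_iff.1
          ((hU.inter hW).mem_nhds ⟨hxU, hxW⟩)
        have hn' : interior (b n) ⊆ U ∩ (φ '' (K \ interior C))ᶜ := interior_subset.trans hn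
        refine ⟨n, trivial, ?_⟩
        refine Set.Subset.trans ?_ hut
        rintro z (⟨a, ha, rfl⟩ | ⟨y', ⟨hy1, hy2⟩, rfl⟩)
        · exact Or.inl ⟨a, (hn' ha).1, rfl⟩
        · refine Or.inr ⟨y', ⟨(hn' hy1).1, fun hyK => ?_⟩, rfl⟩
          exact (hn' hy1).2 ⟨y', ⟨hyK, fun h => hy2 (interior_subset h)⟩, rfl⟩
    exact hbas.isCountablyGenerated
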